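/- arXiv:2006.04616 — 3 statements merged into one kernel-verified Lean document; each statement's English description precedes it below -/
import Mathlib

section
/- Let A1, A2 be monotone access structures on P1 and P2 with p_z ∈ P1, p_z ∉ P2, and assume P1 ∩ P2 = ∅. Then a set Q ⊆ (P1 \ {p_z}) ∪ P2 is minimal in the insertion A1(p_z → A2) only if either Q ⊆ P1 \ {p_z} and Q ∈ A1, or Q = (Q1 \ {p_z}) ∪ Q2 for some Q1 ∈ A1 with p_z ∈ Q1 and Q2 ∈ A2. -/
/-- A set `Q` minimal in the insertion `A1(p_z → A2)` is either a
set of `A1` contained in `P1 \ {p_z}`, or of the form `(Q1 \ {p_z}) ∪ Q2` with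
`Q1 ∈ A1` containing `p_z` and `Q2 ∈ A2`. -/
theorem insertion_minimal_sets {α : Type*} (P1 P2 : Set α) (A1 A2 : Set (Set α))
    (pz : α) (hz1 : pz ∈ P1) (hz2 : pz ∉ P2) (hdisj : P1 ∩ P2 = ∅)
    (hA1sub : ∀ A ∈ A1, A ⊆ P1) (hA2sub : ∀ A ∈ A2, A ⊆ P2)
    (hA1mono : ∀ A ∈ A1, ∀ A' : Set α, A ⊆ A' → A' ⊆ P1 → A' ∈ A1)
    (hA2mono : ∀ A ∈ A2, ∀ A' : Set α, A ⊆ A' → A' ⊆ P2 → A' ∈ A2)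
    (A3 : Set (Set α))
    (hA3 : ∀ A : Set α, A ∈ A3 ↔
      (A ∩ P1 ∈ A1 ∨ ((A ∩ P1) ∪ {pz} ∈ A1 ∧ A ∩ P2 ∈ A2)))
    (Q : Set α) (hQsub : Q ⊆ (P1 \ {pz}) ∪ P2)
    (hQmin : Q ∈ A3 ∧ ∀ Q' : Set α, Q' ⊂ Q → Q' ∉ A3) :
    (Q ⊆ P1 \ {pz} ∧ Q ∈ A1) ∨
    (∃ Q1 ∈ A1, pz ∈ Q1 ∧ ∃ Q2 ∈ A2, Q = (Q1 \ {pz}) ∪ Q2) := by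
  obtain ⟨hQ3, hmin⟩ := hQmin
  rw [hA3] at hQ3
  have hpzQ : pz ∉ Q := by
    intro h
    rcases hQsub h with h' | h'
    · exact h'.2 rfl
    · exact hz2 h'
  rcases hQ3 with h1 | ⟨h1, h2⟩
  · left
    have hQP1 : Q ⊆ P1 := by
      by_contra hc
      have hss : Q ∩ P1 ⊂ Q := by
        refine ⟨Set.inter_subset_left, fun hsub => hc fun x hx => (hsub hx).2⟩
      exact hmin _ hss ((hA3 _).2 (Or.inl (by
        rwa [Set.inter_assoc, Set.inter_self])))
    have hQeq : Q ∩ P1 = Q := Set.inter_eq_left.mpr hQP1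
    exact ⟨fun x hx => ⟨hQP1 hx, fun he => hpzQ (he ▸ hx)⟩, hQeq ▸ h1⟩
  · right
    refine ⟨Q ∩ P1 ∪ {pz}, h1, Or.inr rfl, Q ∩ P2, h2, ?_⟩
    ext x
    constructor
    · intro hx
      rcases hQsub hx with h' | h'
      · exact Or.inl ⟨Or.inl ⟨hx, h'.1⟩, h'.2⟩
      · exact Or.inr ⟨hx, h'⟩
    · rintro (⟨hx | hx, hne⟩ | ⟨hx, _⟩)
      · exact hx.1
      · exact absurd hx hne
      · exact hx
end

section
/- For the M-Grid system with n = k² parties in a k×k grid, let quorums be unions of r rows and r columns with r = √(b/2+1) (so 2r² = b+2). If two quorums Q1 (rows R1, columns C1) and Q2 (rows R2, columns C2) have no common row and no common column (R1 ∩ R2 = ∅ and C1 ∩ C2 = ∅), then |Q1 ∩ Q2| ≥ 2r² = b + 2 > b. -/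
/-- In the M-Grid system, if two quorums (each the union of `r`
rows and `r` columns, with `2r² = b + 2`) share no row and no column, then they
intersect in at least `2r² = b + 2 > b` parties. -/
theorem mgrid_disjoint_lines_intersection (k r b : ℕ) (hr : 1 ≤ r) (hrk : r ≤ k)
    (hb : 2 * r ^ 2 = b + 2)
    (R1 C1 R2 C2 : Finset (Fin k))
    (hR1 : R1.card = r) (hC1 : C1.card = r) (hR2 : R2.card = r) (hC2 : C2.card = r)
    (hRdisj : R1 ∩ R2 = ∅) (hCdisj : C1 ∩ C2 = ∅) :
    2 * r ^ 2 ≤ ((Finset.univ.filter (fun p : Fin k × Fin k => p.1 ∈ R1 ∨ p.2 ∈ C1)) ∩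
        (Finset.univ.filter (fun p : Fin k × Fin k => p.1 ∈ R2 ∨ p.2 ∈ C2))).card ∧
    b < ((Finset.univ.filter (fun p : Fin k × Fin k => p.1 ∈ R1 ∨ p.2 ∈ C1)) ∩
        (Finset.univ.filter (fun p : Fin k × Fin k => p.1 ∈ R2 ∨ p.2 ∈ C2))).card := by
  have hsub : (R1 ×ˢ C2) ∪ (R2 ×ˢ C1) ⊆
      ((Finset.univ.filter (fun p : Fin k × Fin k => p.1 ∈ R1 ∨ p.2 ∈ C1)) ∩
        (Finset.univ.filter (fun p : Fin k × Fin k => p.1 ∈ R2 ∨ p.2 ∈ C2))) := by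
    intro p hp
    simp only [Finset.mem_union, Finset.mem_product] at hp
    simp only [Finset.mem_inter, Finset.mem_filter, Finset.mem_univ, true_and]
    tauto
  have hdisj : Disjoint (R1 ×ˢ C2) (R2 ×ˢ C1) := by
    rw [Finset.disjoint_left]
    intro p hp hp'
    simp only [Finset.mem_product] at hp hp'
    have : p.1 ∈ R1 ∩ R2 := Finset.mem_inter.mpr ⟨hp.1, hp'.1⟩
    rw [hRdisj] at this
    exact absurd this (Finset.notMem_empty _)
  have hcard : ((R1 ×ˢ C2) ∪ (R2 ×ˢ C1)).card = 2 * r ^ 2 := by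
    rw [Finset.card_union_of_disjoint hdisj, Finset.card_product, Finset.card_product,
      hR1, hC2, hR2, hC1]
    ring
  have h := Finset.card_le_card hsub
  rw [hcard] at h
  exact ⟨h, by omega⟩
end

section
/- For the M-Grid dissemination BQS with n = k² parties and b ≤ √n − 1, where quorums are unions of r = √(b/2+1) rows and r columns, any two quorums intersect in more than b parties; hence the consistency property holds with respect to the threshold fail-prone system of all sets of size at most b. -/
/-- For the M-Grid dissemination BQS with `n = k²` parties and
`b ≤ √n − 1`, where quorums are unions of `r = √(b/2+1)` rows and `r` columns,
any two quorums intersect in more than `b` parties, hence consistency holds with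
respect to the fail-prone system of all sets of size at most `b`. -/
theorem mgrid_consistency (k r b : ℕ) (hr : 1 ≤ r) (hrk : r ≤ k)
    (hrb : 2 * r ^ 2 = b + 2) (hbk : b ≤ k - 1)
    (R1 C1 R2 C2 : Finset (Fin k))
    (hR1 : R1.card = r) (hC1 : C1.card = r) (hR2 : R2.card = r) (hC2 : C2.card = r) :
    b < ((Finset.univ.filter (fun p : Fin k × Fin k => p.1 ∈ R1 ∨ p.2 ∈ C1)) ∩
        (Finset.univ.filter (fun p : Fin k × Fin k => p.1 ∈ R2 ∨ p.2 ∈ C2))).card ∧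
    ∀ F : Finset (Fin k × Fin k), F.card ≤ b →
      ¬ ((Finset.univ.filter (fun p : Fin k × Fin k => p.1 ∈ R1 ∨ p.2 ∈ C1)) ∩
          (Finset.univ.filter (fun p : Fin k × Fin k => p.1 ∈ R2 ∨ p.2 ∈ C2)) ⊆ F) := by
  have hk : 1 ≤ k := le_trans hr hrk
  have hbk' : b < k := lt_of_le_of_lt hbk (Nat.sub_lt hk one_pos)
  set S := ((Finset.univ.filter (fun p : Fin k × Fin k => p.1 ∈ R1 ∨ p.2 ∈ C1)) ∩
        (Finset.univ.filter (fun p : Fin k × Fin k => p.1 ∈ R2 ∨ p.2 ∈ C2))) with hS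
  have hmem : ∀ p : Fin k × Fin k,
      p ∈ S ↔ (p.1 ∈ R1 ∨ p.2 ∈ C1) ∧ (p.1 ∈ R2 ∨ p.2 ∈ C2) := by
    intro p; simp [hS]
  have hmain : b < S.card := by
    by_cases hRR : (R1 ∩ R2).Nonempty
    · obtain ⟨i, hi⟩ := hRR
      simp only [Finset.mem_inter] at hi
      have hsub : ({i} : Finset (Fin k)) ×ˢ (Finset.univ : Finset (Fin k)) ⊆ S := by
        intro p hp
        simp only [Finset.mem_product, Finset.mem_singleton] at hp
        rw [hmem]
        exact ⟨Or.inl (hp.1 ▸ hi.1), Or.inl (hp.1 ▸ hi.2)⟩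
      have hcard : (({i} : Finset (Fin k)) ×ˢ (Finset.univ : Finset (Fin k))).card = k := by
        simp
      calc b < k := hbk'
        _ = _ := hcard.symm
        _ ≤ S.card := Finset.card_le_card hsub
    · by_cases hCC : (C1 ∩ C2).Nonempty
      · obtain ⟨j, hj⟩ := hCC
        simp only [Finset.mem_inter] at hj
        have hsub : (Finset.univ : Finset (Fin k)) ×ˢ ({j} : Finset (Fin k)) ⊆ S := by
          intro p hp
          simp only [Finset.mem_product, Finset.mem_singleton] at hp
          rw [hmem]
          exact ⟨Or.inr (hp.2 ▸ hj.1), Or.inr (hp.2 ▸ hj.2)⟩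
        have hcard : ((Finset.univ : Finset (Fin k)) ×ˢ ({j} : Finset (Fin k))).card = k := by
          simp
        calc b < k := hbk'
          _ = _ := hcard.symm
          _ ≤ S.card := Finset.card_le_card hsub
      · have hRR' : R1 ∩ R2 = ∅ := Finset.not_nonempty_iff_eq_empty.mp hRR
        have hsub : (R1 ×ˢ C2) ∪ (R2 ×ˢ C1) ⊆ S := by
          intro p hp
          rw [hmem]
          simp only [Finset.mem_union, Finset.mem_product] at hp
          rcases hp with ⟨h1, h2⟩ | ⟨h1, h2⟩
          · exact ⟨Or.inl h1, Or.inr h2⟩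
          · exact ⟨Or.inr h2, Or.inl h1⟩
        have hdisj : Disjoint (R1 ×ˢ C2) (R2 ×ˢ C1) := by
          rw [Finset.disjoint_left]
          intro p hp hp'
          simp only [Finset.mem_product] at hp hp'
          have : p.1 ∈ R1 ∩ R2 := Finset.mem_inter.mpr ⟨hp.1, hp'.1⟩
          rw [hRR'] at this
          exact absurd this (Finset.notMem_empty _)
        have hcard : ((R1 ×ˢ C2) ∪ (R2 ×ˢ C1)).card = b + 2 := by
          rw [Finset.card_union_of_disjoint hdisj, Finset.card_product,
            Finset.card_product, hR1, hC1, hR2, hC2, ← hrb]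
          ring
        calc b < b + 2 := by omega
          _ = _ := hcard.symm
          _ ≤ S.card := Finset.card_le_card hsub
  refine ⟨hmain, fun F hF hsub => ?_⟩
  have := Finset.card_le_card hsub
  omega
end
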